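/- Let (T_n)_{n≥0} be a consistent sequence of nonnegative symmetric tables (T_n a nonnegative 2ⁿ×2ⁿ matrix indexed by binary strings of length n with T_n(x,y) = T_{n+1}(x⌢0,y⌢0)+T_{n+1}(x⌢0,y⌢1)+T_{n+1}(x⌢1,y⌢0)+T_{n+1}(x⌢1,y⌢1)), and let μ be the symmetric Borel measure on 𝒞 × 𝒞 with μ(S_x × S_y) = T_n(x,y) for all strings x,y of length n. Then for every positive integer k, C(μ,k) equals the topological closure of ⋃_{n∈ℕ} C(T_n,k). -/

import Mathlib

open MeasureTheory Matrix
open scoped Pointwise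

noncomputable section

/-- The Cantor set `{0,1}^ℕ`. -/
abbrev Cantor : Type := ℕ → Bool

/-- Cylinder set of a binary string given as a function `Fin n → Bool`. -/
def cylF {n : ℕ} (x : Fin n → Bool) : Set Cantor := {ω | ∀ i : Fin n, ω i = x i}

/-- Cylinder set of a binary string given as a list. -/
def cyl (x : List Bool) : Set Cantor := {ω | ∀ i : Fin x.length, ω i = x.get i}

/-- `ν` is the fair coin-flipping (uniform product) measure on the Cantor set:
the unique Borel probability measure giving every cylinder of depth `n` mass `2⁻ⁿ`. -/
def IsCoinMeasure (ν : Measure Cantor) : Prop :=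
  IsProbabilityMeasure ν ∧ ∀ (n : ℕ) (x : Fin n → Bool), ν (cylF x) = (1 / 2 : ENNReal) ^ n

/-- `K(k,n)`: nonnegative `k × I` matrices with all row sums `|I|/k` and all column sums `1`. -/
def Kset (k : ℕ) (I : Type) [Fintype I] : Set (Matrix (Fin k) I ℝ) :=
  {M | (∀ i j, 0 ≤ M i j) ∧ (∀ i, ∑ j, M i j = (Fintype.card I : ℝ) / k) ∧
       (∀ j, ∑ i, M i j = 1)}

/-- The `k`-shape `C(S,k) = {M S Mᵀ : M ∈ K(k,n)}` of a square matrix `S`. -/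
def matShape {I : Type} [Fintype I] (S : Matrix I I ℝ) (k : ℕ) :
    Set (Matrix (Fin k) (Fin k) ℝ) :=
  (fun M => M * S * Mᵀ) '' Kset k I

/-- `γ(S)`: the sum of all entries of `S`. -/
def gamma {I : Type} [Fintype I] (S : Matrix I I ℝ) : ℝ := ∑ i, ∑ j, S i j

/-- The entrywise ℓ¹ norm of a matrix. -/
def l1 {k : ℕ} (A : Matrix (Fin k) (Fin k) ℝ) : ℝ := ∑ i, ∑ j, |A i j|

/-- The Hausdorff distance (w.r.t. the entrywise ℓ¹ norm) between `A` and `B` is at most `ε`. -/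
def hdistLE {k : ℕ} (A B : Set (Matrix (Fin k) (Fin k) ℝ)) (ε : ℝ) : Prop :=
  (∀ X ∈ A, ∃ Y ∈ B, l1 (X - Y) ≤ ε) ∧ (∀ Y ∈ B, ∃ X ∈ A, l1 (X - Y) ≤ ε)

/-- Convergence of a sequence of shapes to `L` in the ℓ¹-Hausdorff metric. -/
def ShapeTendsto {k : ℕ} (C : ℕ → Set (Matrix (Fin k) (Fin k) ℝ))
    (L : Set (Matrix (Fin k) (Fin k) ℝ)) : Prop :=
  ∀ ε : ℝ, 0 < ε → ∃ N : ℕ, ∀ n ≥ N, hdistLE (C n) L ε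

/-- `C₀(μ,k)`: matrices `M` with `M i j = ∫ fᵢ(x) fⱼ(y) dμ` for a measurable partition of unity
`f₁,…,f_k` with `∫ fᵢ dν = 1/k`. -/
def mShape0 {α : Type} [MeasurableSpace α] (ν : Measure α) (μ : Measure (α × α)) (k : ℕ) :
    Set (Matrix (Fin k) (Fin k) ℝ) :=
  {M | ∃ f : Fin k → α → ℝ,
    (∀ i, Measurable (f i)) ∧ (∀ i x, 0 ≤ f i x) ∧ (∀ x, ∑ i, f i x = 1) ∧
    (∀ i, ∫ x, f i x ∂ν = 1 / k) ∧
    (∀ i j, M i j = ∫ p, f i p.1 * f j p.2 ∂μ)}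

/-- `C(μ,k)`: the topological closure of `C₀(μ,k)`. -/
def mShape {α : Type} [MeasurableSpace α] (ν : Measure α) (μ : Measure (α × α)) (k : ℕ) :
    Set (Matrix (Fin k) (Fin k) ℝ) := closure (mShape0 ν μ k)

/-- `C_c(μ,k)`: as `C₀(μ,k)` but with continuous witness functions. -/
def mShapeC (ν : Measure Cantor) (μ : Measure (Cantor × Cantor)) (k : ℕ) :
    Set (Matrix (Fin k) (Fin k) ℝ) :=
  {M | ∃ f : Fin k → Cantor → ℝ,
    (∀ i, Continuous (f i)) ∧ (∀ i x, 0 ≤ f i x) ∧ (∀ x, ∑ i, f i x = 1) ∧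
    (∀ i, ∫ x, f i x ∂ν = 1 / k) ∧
    (∀ i j, M i j = ∫ p, f i p.1 * f j p.2 ∂μ)}

open Classical in
/-- The real adjacency matrix of a simple graph. -/
def adjMat {V : Type} [Fintype V] (G : SimpleGraph V) : Matrix V V ℝ :=
  fun a b => if G.Adj a b then 1 else 0

/-- `C₀(G,k) = ‖A_G‖₁⁻¹ ⬝ C(A_G,k)` for a finite graph `G`. -/
def graphShape {V : Type} [Fintype V] (G : SimpleGraph V) (k : ℕ) :
    Set (Matrix (Fin k) (Fin k) ℝ) :=
  (gamma (adjMat G))⁻¹ • matShape (adjMat G) k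

/-- `K̂(k,m)`: characteristic matrices of balanced partitions of `{1,…,m}` into `k` classes. -/
def Khat (k m : ℕ) : Set (Matrix (Fin k) (Fin m) ℝ) :=
  {M | (∀ i j, M i j = 0 ∨ M i j = 1) ∧ (∀ j, ∑ i, M i j = 1) ∧
       (∀ i, ∑ j, M i j = (⌈(m : ℝ) / k⌉₊ : ℝ) ∨ ∑ j, M i j = (⌊(m : ℝ) / k⌋₊ : ℝ))}

/-- `C̃₀(μ,α)`: matrices coming from a measurable partition of unity with `∫ fᵢ dν = αᵢ`. -/
def tShape0 {α : Type} [MeasurableSpace α] (ν : Measure α) (μ : Measure (α × α)) {m : ℕ}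
    (a : Fin m → ℝ) : Set (Matrix (Fin m) (Fin m) ℝ) :=
  {M | ∃ f : Fin m → α → ℝ,
    (∀ i, Measurable (f i)) ∧ (∀ i x, 0 ≤ f i x) ∧ (∀ x, ∑ i, f i x = 1) ∧
    (∀ i, ∫ x, f i x ∂ν = a i) ∧
    (∀ i j, M i j = ∫ p, f i p.1 * f j p.2 ∂μ)}

/-- `C̃(μ,α)`: the topological closure of `C̃₀(μ,α)`. -/
def tShape {α : Type} [MeasurableSpace α] (ν : Measure α) (μ : Measure (α × α)) {m : ℕ}
    (a : Fin m → ℝ) : Set (Matrix (Fin m) (Fin m) ℝ) := closure (tShape0 ν μ a)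

/-- The Hausdorff distance w.r.t. the entrywise ℓ∞ norm between `A` and `B` is at most `ε`. -/
def hdistInfLE {m : ℕ} (A B : Set (Matrix (Fin m) (Fin m) ℝ)) (ε : ℝ) : Prop :=
  (∀ X ∈ A, ∃ Y ∈ B, ∀ i j, |X i j - Y i j| ≤ ε) ∧
  (∀ Y ∈ B, ∃ X ∈ A, ∀ i j, |X i j - Y i j| ≤ ε)

namespace Stmt11
abbrev res (n : ℕ) : Cantor → (Fin n → Bool) := fun ω i => ω (i : ℕ)

lemma measurable_res (n : ℕ) : Measurable (res n) :=
  measurable_pi_lambda _ (fun i => measurable_pi_apply (i : ℕ))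

lemma continuous_res (n : ℕ) : Continuous (res n) :=
  continuous_pi (fun i => continuous_apply (i : ℕ))

lemma res_preimage {n : ℕ} (x : Fin n → Bool) : res n ⁻¹' {x} = cylF x := by
  ext ω
  simp [cylF, res, funext_iff]

lemma measurableSet_cylF {n : ℕ} (x : Fin n → Bool) : MeasurableSet (cylF x) := by
  rw [← res_preimage]; exact measurable_res n (measurableSet_singleton x)

lemma isOpen_cylF {n : ℕ} (x : Fin n → Bool) : IsOpen (cylF x) := by
  rw [← res_preimage]; exact (isOpen_discrete _).preimage (continuous_res n)

lemma cylF_zero (x : Fin 0 → Bool) : cylF x = Set.univ := by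
  ext ω; simp [cylF]

lemma mem_cylF_res {n : ℕ} (ω : Cantor) : ω ∈ cylF (res n ω) := fun _ => rfl

lemma res_eq_of_mem_cylF {n : ℕ} {x : Fin n → Bool} {ω : Cantor} (h : ω ∈ cylF x) :
    res n ω = x := funext h

/-- step function integral -/
lemma integral_step (m : Measure Cantor) [IsFiniteMeasure m] {n : ℕ} (c : (Fin n → Bool) → ℝ) :
    ∫ ω, c (res n ω) ∂m = ∑ x, (m (cylF x)).toReal * c x := by
  have h1 : ∫ ω, c (res n ω) ∂m = ∫ y, c y ∂(m.map (res n)) :=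
    (integral_map (measurable_res n).aemeasurable Measurable.of_discrete.aestronglyMeasurable).symm
  rw [h1]
  rw [integral_fintype .of_finite]
  refine Finset.sum_congr rfl fun x _ => ?_
  rw [measureReal_def, Measure.map_apply (measurable_res n) (measurableSet_singleton x), res_preimage, smul_eq_mul]

lemma integral_step2 (m : Measure (Cantor × Cantor)) [IsFiniteMeasure m] {n : ℕ}
    (c d : (Fin n → Bool) → ℝ) :
    ∫ p, c (res n p.1) * d (res n p.2) ∂m
      = ∑ x, ∑ y, (m (cylF x ×ˢ cylF y)).toReal * (c x * d y) := by
  have hR : Measurable (Prod.map (res n) (res n)) :=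
    (measurable_res n).prodMap (measurable_res n)
  have h1 : ∫ p, c (res n p.1) * d (res n p.2) ∂m
      = ∫ q, c q.1 * d q.2 ∂(m.map (Prod.map (res n) (res n))) := by
    rw [integral_map hR.aemeasurable
      (f := fun q : ((Fin n → Bool) × (Fin n → Bool)) => c q.1 * d q.2)
      Measurable.of_discrete.aestronglyMeasurable]
    simp [Prod.map]
  rw [h1]
  rw [integral_fintype .of_finite, Fintype.sum_prod_type]
  refine Finset.sum_congr rfl fun x _ => Finset.sum_congr rfl fun y _ => ?_
  rw [measureReal_def, Measure.map_apply hR (measurableSet_singleton (x, y))]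
  have : Prod.map (res n) (res n) ⁻¹' {(x, y)} = cylF x ×ˢ cylF y := by
    rw [← Set.singleton_prod_singleton, Set.preimage_prod_map_prod, res_preimage, res_preimage]
  rw [this, smul_eq_mul]

lemma integrable_bdd {α : Type*} [MeasurableSpace α] (m : Measure α) [IsFiniteMeasure m]
    {f : α → ℝ} {C : ℝ}
    (hf : Measurable f) (hC : ∀ x, ‖f x‖ ≤ C) : Integrable f m :=
  (integrable_const C).mono' hf.aestronglyMeasurable (Filter.Eventually.of_forall hC)

lemma pairwise_disjoint_cylF (n : ℕ) :
    Pairwise (Function.onFun Disjoint (fun x : Fin n → Bool => cylF x)) := by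
  intro x y hxy
  simp only [Function.onFun, ← res_preimage]
  exact Disjoint.preimage _ (Set.disjoint_singleton.2 hxy)

lemma iUnion_cylF (n : ℕ) : (⋃ x : Fin n → Bool, cylF x) = Set.univ :=
  Set.eq_univ_of_forall fun ω => Set.mem_iUnion.2 ⟨res n ω, mem_cylF_res ω⟩

/-- splitting an integral over the depth-`n` cylinders -/
lemma integral_sum_cylF (m : Measure Cantor) [IsFiniteMeasure m] {n : ℕ} {f : Cantor → ℝ}
    (hf : Integrable f m) :
    ∫ ω, f ω ∂m = ∑ x : Fin n → Bool, ∫ ω in cylF x, f ω ∂m := by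
  rw [← setIntegral_univ, ← iUnion_cylF n]
  exact integral_iUnion_fintype (fun x => measurableSet_cylF x) (pairwise_disjoint_cylF n)
    (fun x => hf.integrableOn)

/-- extension of a finite string to a point of Cantor space -/
def ext (n : ℕ) (x : Fin n → Bool) : Cantor := fun i => if h : i < n then x ⟨i, h⟩ else false

lemma ext_mem_cylF (n : ℕ) (x : Fin n → Bool) : ext n x ∈ cylF x := by
  intro i; simp [ext, i.2]

/-- cylinder neighborhoods form a basis -/
lemma exists_cyl_subset {ω : Cantor} {U : Set Cantor} (hU : U ∈ nhds ω) :
    ∃ n : ℕ, cylF (res n ω) ⊆ U := by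
  rw [nhds_pi, Filter.mem_pi] at hU
  obtain ⟨I, hIfin, t, ht, hsub⟩ := hU
  refine ⟨hIfin.toFinset.sup id + 1, fun ω' hω' => hsub ?_⟩
  intro i hi
  have hin : i < hIfin.toFinset.sup id + 1 :=
    Nat.lt_succ_of_le (Finset.le_sup (f := id) (hIfin.mem_toFinset.2 hi))
  have := hω' ⟨i, hin⟩
  simp only [res] at this
  rw [this]
  exact mem_of_mem_nhds (ht i)

/-- uniform approximation of a continuous function by a cylinder step function -/
lemma cont_step {g : Cantor → ℝ} (hg : Continuous g) {ε : ℝ} (hε : 0 < ε) :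
    ∃ (n : ℕ) (c : (Fin n → Bool) → ℝ), ∀ ω, |g ω - c (res n ω)| ≤ ε := by
  have key : ∀ ω : Cantor, ∃ n : ℕ, ∀ ω' ∈ cylF (res n ω), |g ω' - g ω| < ε / 2 := by
    intro ω
    have : {ω' | |g ω' - g ω| < ε / 2} ∈ nhds ω := by
      have : Continuous fun ω' => |g ω' - g ω| := (hg.sub continuous_const).abs
      have h0 : |g ω - g ω| < ε / 2 := by simpa using half_pos hε
      exact this.continuousAt.preimage_mem_nhds (Iio_mem_nhds h0)
    obtain ⟨n, hn⟩ := exists_cyl_subset this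
    exact ⟨n, fun ω' hω' => hn hω'⟩
  choose nf hnf using key
  obtain ⟨t, ht⟩ := isCompact_univ.elim_finite_subcover
    (fun ω : Cantor => cylF (res (nf ω) ω)) (fun ω => isOpen_cylF _)
    (fun ω _ => Set.mem_iUnion.2 ⟨ω, mem_cylF_res ω⟩)
  by_cases htne : t.Nonempty
  · set N := t.sup nf with hN
    refine ⟨N, fun x => g (ext N x), fun ω => ?_⟩
    obtain ⟨ω₁, hω₁t, hω₁⟩ := Set.mem_iUnion₂.1 (ht (Set.mem_univ ω))
    have hle : nf ω₁ ≤ N := Finset.le_sup hω₁t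
    set ω₀ := ext N (res N ω) with hω₀
    have hagree : ∀ i : ℕ, i < N → ω₀ i = ω i := by
      intro i hi; simp [hω₀, ext, hi, res]
    have hω₀mem : ω₀ ∈ cylF (res (nf ω₁) ω₁) := by
      intro i
      rw [hagree i (lt_of_lt_of_le i.2 hle)]
      exact hω₁ i
    have h1 := hnf ω₁ ω hω₁
    have h2 := hnf ω₁ ω₀ hω₀mem
    have : |g ω - g ω₀| ≤ ε := by
      have := abs_sub (g ω - g ω₁) (g ω₀ - g ω₁)
      have habs : |g ω - g ω₀| ≤ |g ω - g ω₁| + |g ω₀ - g ω₁| := by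
        have : g ω - g ω₀ = (g ω - g ω₁) - (g ω₀ - g ω₁) := by ring
        rw [this]
        exact abs_sub _ _
      linarith
    simpa [hω₀] using this
  · exfalso
    have := ht (Set.mem_univ (fun _ => false))
    simp only [Set.mem_iUnion₂] at this
    obtain ⟨ω₁, hω₁t, _⟩ := this
    exact htne ⟨ω₁, hω₁t⟩

/-- density of cylinder step functions in L¹ of a finite Borel measure on Cantor space -/
lemma dens (ρ : Measure Cantor) [IsFiniteMeasure ρ] {f : Cantor → ℝ}
    (hf : Measurable f) (hb : ∀ x, ‖f x‖ ≤ 1) {ε : ℝ} (hε : 0 < ε) :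
    ∃ (n : ℕ) (c : (Fin n → Bool) → ℝ), ∫ ω, |f ω - c (res n ω)| ∂ρ ≤ ε := by
  have hfi : Integrable f ρ := integrable_bdd ρ hf hb
  obtain ⟨g, hg, hgi⟩ := hfi.exists_boundedContinuous_integral_sub_le (half_pos hε)
  set R := (ρ Set.univ).toReal with hRdef
  have hR : 0 ≤ R := ENNReal.toReal_nonneg
  have hε' : 0 < ε / 2 / (R + 1) := by positivity
  obtain ⟨n, c, hc⟩ := cont_step g.continuous hε'
  refine ⟨n, c, ?_⟩
  have h1 : ∀ ω, |f ω - c (res n ω)| ≤ ‖f ω - g ω‖ + ε / 2 / (R + 1) := by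
    intro ω
    have := hc ω
    have h2 : f ω - c (res n ω) = (f ω - g ω) + (g ω - c (res n ω)) := by ring
    rw [h2]
    calc |(f ω - g ω) + (g ω - c (res n ω))| ≤ |f ω - g ω| + |g ω - c (res n ω)| := abs_add_le _ _
      _ ≤ ‖f ω - g ω‖ + ε / 2 / (R + 1) := by
          rw [Real.norm_eq_abs]; linarith
  have hmeas : Measurable fun ω => |f ω - c (res n ω)| :=
    (hf.sub (Measurable.of_discrete.comp (measurable_res n))).abs
  have hint1 : Integrable (fun ω => |f ω - c (res n ω)|) ρ := by
    refine integrable_bdd (C := 1 + ‖g‖ + ε / 2 / (R + 1)) ρ hmeas fun ω => ?_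
    have h3 := h1 ω
    have h4 : ‖f ω - g ω‖ ≤ 1 + ‖g‖ :=
      (norm_sub_le _ _).trans (add_le_add (hb ω) (g.norm_coe_le_norm ω))
    rw [Real.norm_eq_abs, abs_abs]
    linarith
  have hint0 : Integrable (fun ω => ‖f ω - g ω‖) ρ := by
    simpa using (hfi.sub hgi).norm
  have hint2 : Integrable (fun ω => ‖f ω - g ω‖ + ε / 2 / (R + 1)) ρ :=
    hint0.add (integrable_const _)
  calc ∫ ω, |f ω - c (res n ω)| ∂ρ
      ≤ ∫ ω, (‖f ω - g ω‖ + ε / 2 / (R + 1)) ∂ρ :=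
        integral_mono hint1 hint2 h1
    _ = (∫ ω, ‖f ω - g ω‖ ∂ρ) + (ε / 2 / (R + 1)) * R := by
        rw [integral_add hint0 (integrable_const _), integral_const, smul_eq_mul,
          mul_comm, measureReal_def, ← hRdef]
    _ ≤ ε / 2 + ε / 2 := by
        have h5 : (ε / 2 / (R + 1)) * R ≤ ε / 2 := by
          rw [div_mul_eq_mul_div, div_le_iff₀ (by linarith)]
          nlinarith
        linarith
    _ = ε := by ring

/-- average of `f` over the depth-`n` cylinders (w.r.t. `ρ`), with default value on null cylinders -/
def av (ρ : Measure Cantor) {n : ℕ} (dflt : ℝ) (f : Cantor → ℝ) (x : Fin n → Bool) : ℝ :=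
  if ρ (cylF x) = 0 then dflt else (∫ ω in cylF x, f ω ∂ρ) / (ρ (cylF x)).toReal

lemma av_nonneg {ρ : Measure Cantor} {n : ℕ} {dflt : ℝ} {f : Cantor → ℝ}
    (hd : 0 ≤ dflt) (hf : ∀ ω, 0 ≤ f ω) (x : Fin n → Bool) : 0 ≤ av ρ dflt f x := by
  unfold av
  split
  · exact hd
  · exact div_nonneg (setIntegral_nonneg (measurableSet_cylF x) fun ω _ => hf ω)
      ENNReal.toReal_nonneg

lemma av_le_one {ρ : Measure Cantor} [IsFiniteMeasure ρ] {n : ℕ} {dflt : ℝ} {f : Cantor → ℝ}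
    (hd : dflt ≤ 1) (hf : ∀ ω, f ω ≤ 1) (hfi : Integrable f ρ) (x : Fin n → Bool) :
    av ρ dflt f x ≤ 1 := by
  unfold av
  split
  · exact hd
  · rename_i h0
    have htor : 0 < (ρ (cylF x)).toReal :=
      ENNReal.toReal_pos h0 (measure_ne_top ρ _)
    rw [div_le_one htor]
    calc ∫ ω in cylF x, f ω ∂ρ ≤ ∫ _ω in cylF x, (1 : ℝ) ∂ρ :=
          setIntegral_mono_on hfi.integrableOn (integrable_const _).integrableOn
            (measurableSet_cylF x) (fun ω _ => hf ω)
      _ = (ρ (cylF x)).toReal := by rw [setIntegral_const, smul_eq_mul, mul_one, measureReal_def]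

/-- key contraction estimate: the cylinder averaging is (up to factor 2) as good an
approximation as any cylinder step function -/
lemma av_err (ρ : Measure Cantor) [IsFiniteMeasure ρ] {n : ℕ} {f : Cantor → ℝ}
    (hf : Measurable f) (hb : ∀ x, ‖f x‖ ≤ 1) {dflt : ℝ} (hd : ‖dflt‖ ≤ 1)
    (c : (Fin n → Bool) → ℝ) :
    ∫ ω, |f ω - av ρ dflt f (res n ω)| ∂ρ ≤ 2 * ∫ ω, |f ω - c (res n ω)| ∂ρ := by
  set a := av ρ (n := n) dflt f with ha
  have hfi : Integrable f ρ := integrable_bdd ρ hf hb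
  have hab : ∀ x, |a x| ≤ 1 := by
    intro x
    rw [ha]; unfold av
    split
    · rwa [Real.norm_eq_abs] at hd
    · rename_i h0
      have htor : 0 < (ρ (cylF x)).toReal := ENNReal.toReal_pos h0 (measure_ne_top ρ _)
      rw [abs_div, abs_of_pos htor, div_le_one htor]
      calc |∫ ω in cylF x, f ω ∂ρ| ≤ ∫ ω in cylF x, |f ω| ∂ρ := by
            simpa [Real.norm_eq_abs] using
              norm_integral_le_integral_norm (μ := ρ.restrict (cylF x)) f
        _ ≤ ∫ _ω in cylF x, (1:ℝ) ∂ρ :=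
            setIntegral_mono_on hfi.abs.integrableOn (integrable_const _).integrableOn
              (measurableSet_cylF x)
              (fun ω _ => by simpa [Real.norm_eq_abs] using hb ω)
        _ = (ρ (cylF x)).toReal := by rw [setIntegral_const, smul_eq_mul, mul_one, measureReal_def]
  have hameas : Measurable fun ω => a (res n ω) :=
    (Measurable.of_discrete (f := a)).comp (measurable_res n)
  have hint1 : Integrable (fun ω => |f ω - a (res n ω)|) ρ := by
    refine integrable_bdd (C := 2) ρ ((hf.sub hameas).abs) fun ω => ?_
    rw [Real.norm_eq_abs, abs_abs]
    calc |f ω - a (res n ω)| ≤ |f ω| + |a (res n ω)| := abs_sub _ _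
      _ ≤ 2 := by have := hb ω; rw [Real.norm_eq_abs] at this; linarith [hab (res n ω)]
  have hcmeas : Measurable fun ω => c (res n ω) := Measurable.of_discrete.comp (measurable_res n)
  have hint2 : Integrable (fun ω => |f ω - c (res n ω)|) ρ := by
    refine integrable_bdd (C := 1 + |c (res n (fun _ => false))| + ∑ x, |c x|) ρ
      ((hf.sub hcmeas).abs) fun ω => ?_
    rw [Real.norm_eq_abs, abs_abs]
    calc |f ω - c (res n ω)| ≤ |f ω| + |c (res n ω)| := abs_sub _ _
      _ ≤ 1 + |c (res n (fun _ => false))| + ∑ x, |c x| := by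
          have h1 := hb ω
          rw [Real.norm_eq_abs] at h1
          have h2 : |c (res n ω)| ≤ ∑ x, |c x| :=
            Finset.single_le_sum (f := fun x => |c x|) (fun x _ => abs_nonneg _)
              (Finset.mem_univ _)
          have : (0:ℝ) ≤ |c (res n (fun _ => false))| := abs_nonneg _
          linarith
  have hint3 : Integrable (fun ω => |c (res n ω) - a (res n ω)|) ρ := by
    refine integrable_bdd (C := ∑ x, |c x| + 1) ρ ((hcmeas.sub hameas).abs) fun ω => ?_
    rw [Real.norm_eq_abs, abs_abs]
    calc |c (res n ω) - a (res n ω)| ≤ |c (res n ω)| + |a (res n ω)| := abs_sub _ _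
      _ ≤ ∑ x, |c x| + 1 := add_le_add
          (Finset.single_le_sum (f := fun x => |c x|) (fun x _ => abs_nonneg _)
            (Finset.mem_univ _)) (hab _)
  -- pointwise triangle inequality
  have hptw : ∀ ω, |f ω - a (res n ω)| ≤ |f ω - c (res n ω)| + |c (res n ω) - a (res n ω)| := by
    intro ω
    have : f ω - a (res n ω) = (f ω - c (res n ω)) + (c (res n ω) - a (res n ω)) := by ring
    rw [this]
    exact abs_add_le _ _
  have step1 : ∫ ω, |f ω - a (res n ω)| ∂ρ
      ≤ ∫ ω, |f ω - c (res n ω)| ∂ρ + ∫ ω, |c (res n ω) - a (res n ω)| ∂ρ := by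
    rw [← integral_add hint2 hint3]
    exact integral_mono hint1 (hint2.add hint3) hptw
  -- second term bounded by the first
  have step2 : ∫ ω, |c (res n ω) - a (res n ω)| ∂ρ ≤ ∫ ω, |f ω - c (res n ω)| ∂ρ := by
    have hs : ∫ ω, |c (res n ω) - a (res n ω)| ∂ρ
        = ∑ x, (ρ (cylF x)).toReal * |c x - a x| :=
      integral_step ρ (fun x => |c x - a x|)
    rw [hs, integral_sum_cylF ρ hint2]
    refine Finset.sum_le_sum fun x _ => ?_
    by_cases h0 : ρ (cylF x) = 0
    · rw [h0, ENNReal.toReal_zero, zero_mul]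
      exact setIntegral_nonneg (measurableSet_cylF x) fun ω _ => abs_nonneg _
    · have htor : 0 < (ρ (cylF x)).toReal := ENNReal.toReal_pos h0 (measure_ne_top ρ _)
      have hax : a x = (∫ ω in cylF x, f ω ∂ρ) / (ρ (cylF x)).toReal := by
        rw [ha]; unfold av; rw [if_neg h0]
      have hcx : c x = (∫ _ω in cylF x, c x ∂ρ) / (ρ (cylF x)).toReal := by
        rw [setIntegral_const, smul_eq_mul, mul_comm, mul_div_assoc, measureReal_def, div_self htor.ne', mul_one]
      have key : c x - a x = (∫ ω in cylF x, (c x - f ω) ∂ρ) / (ρ (cylF x)).toReal := by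
        rw [integral_sub (integrable_const _).integrableOn hfi.integrableOn, sub_div,
          ← hcx, ← hax]
      rw [key, abs_div, abs_of_pos htor, mul_comm, div_mul_cancel₀ _ htor.ne']
      calc |∫ ω in cylF x, (c x - f ω) ∂ρ| ≤ ∫ ω in cylF x, |c x - f ω| ∂ρ := by
            simpa [Real.norm_eq_abs] using
              norm_integral_le_integral_norm (μ := ρ.restrict (cylF x)) (fun ω => c x - f ω)
        _ = ∫ ω in cylF x, |f ω - c (res n ω)| ∂ρ := by
            refine setIntegral_congr_fun (measurableSet_cylF x) fun ω hω => ?_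
            rw [res_eq_of_mem_cylF hω, abs_sub_comm]
  linarith

lemma mem_closure_mat {k : ℕ} {S : Set (Matrix (Fin k) (Fin k) ℝ)} {A : Matrix (Fin k) (Fin k) ℝ}
    (h : ∀ δ : ℝ, 0 < δ → ∃ B ∈ S, ∀ i j, |A i j - B i j| ≤ δ) : A ∈ closure S := by
  have key : ∀ m : ℕ, ∃ B ∈ S, ∀ i j, |A i j - B i j| ≤ 1 / (m + 1) := fun m =>
    h _ (by positivity)
  choose B hBS hB using key
  have htend : Filter.Tendsto (fun m : ℕ => (B m : Fin k → Fin k → ℝ)) Filter.atTop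
      (nhds (A : Fin k → Fin k → ℝ)) := by
    apply tendsto_pi_nhds.2
    intro i
    rw [tendsto_pi_nhds]
    intro j
    rw [Metric.tendsto_atTop]
    intro ε hε
    obtain ⟨m0, hm0⟩ := exists_nat_one_div_lt hε
    refine ⟨m0, fun m hm => ?_⟩
    have h1 : |A i j - B m i j| ≤ 1 / (m + 1) := hB m i j
    have h2 : (1 : ℝ) / (m + 1) ≤ 1 / (m0 + 1) := by
      apply one_div_le_one_div_of_le (by positivity)
      exact_mod_cast add_le_add_left (Nat.cast_le.2 hm) 1
    rw [Real.dist_eq, abs_sub_comm]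
    calc |A i j - B m i j| ≤ 1 / (m + 1) := h1
      _ ≤ 1 / (m0 + 1) := h2
      _ < ε := hm0
  exact mem_closure_of_tendsto htend (Filter.Eventually.of_forall hBS)

lemma card_fun_bool (n : ℕ) : (Fintype.card (Fin n → Bool) : ℝ) = (2:ℝ) ^ n := by
  simp [Fintype.card_fun]

lemma nu_cyl_toReal {ν : Measure Cantor}
    (hcyl : ∀ (n : ℕ) (x : Fin n → Bool), ν (cylF x) = (1 / 2 : ENNReal) ^ n)
    {n : ℕ} (x : Fin n → Bool) : (ν (cylF x)).toReal = ((2:ℝ)⁻¹) ^ n := by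
  rw [hcyl n x, ENNReal.toReal_pow]
  norm_num

/-- the matrix entries of `M S Mᵀ` as integrals of step functions against `μ` -/
lemma matShape_entry (μ : Measure (Cantor × Cantor)) [IsFiniteMeasure μ] {n : ℕ}
    (T : Matrix (Fin n → Bool) (Fin n → Bool) ℝ)
    (hnn : ∀ x y, 0 ≤ T x y)
    (hμT : ∀ x y, μ (cylF x ×ˢ cylF y) = ENNReal.ofReal (T x y))
    {k : ℕ} (M : Matrix (Fin k) ((Fin n → Bool)) ℝ) (i j : Fin k) :
    (M * T * Mᵀ) i j = ∫ p, M i (res n p.1) * M j (res n p.2) ∂μ := by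
  rw [integral_step2 μ (M i) (M j)]
  have hT : ∀ x y, (μ (cylF x ×ˢ cylF y)).toReal = T x y := fun x y => by
    rw [hμT x y, ENNReal.toReal_ofReal (hnn x y)]
  simp only [hT, Matrix.mul_apply, Matrix.transpose_apply, Finset.sum_mul]
  rw [Finset.sum_comm]
  exact Finset.sum_congr rfl fun x _ => Finset.sum_congr rfl fun y _ => by ring

/-- the easy inclusion -/
lemma matShape_subset_mShape0 {ν : Measure Cantor} [IsProbabilityMeasure ν]
    (hcyl : ∀ (n : ℕ) (x : Fin n → Bool), ν (cylF x) = (1 / 2 : ENNReal) ^ n)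
    (μ : Measure (Cantor × Cantor)) [IsFiniteMeasure μ]
    {n : ℕ} (T : Matrix (Fin n → Bool) (Fin n → Bool) ℝ)
    (hnn : ∀ x y, 0 ≤ T x y)
    (hμT : ∀ x y, μ (cylF x ×ˢ cylF y) = ENNReal.ofReal (T x y))
    {k : ℕ} (hk : 0 < k) :
    matShape T k ⊆ mShape0 ν μ k := by
  rintro A ⟨M, ⟨hM0, hMrow, hMcol⟩, rfl⟩
  refine ⟨fun i ω => M i (res n ω),
    fun i => (Measurable.of_discrete (f := M i)).comp (measurable_res n),
    fun i ω => hM0 i _, fun ω => hMcol _, ?_, ?_⟩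
  · intro i
    rw [integral_step ν (M i)]
    have h2 : ((2:ℝ)⁻¹) ^ n * (2:ℝ) ^ n = 1 := by
      rw [← mul_pow]; norm_num
    calc ∑ x, (ν (cylF x)).toReal * M i x = ∑ x, ((2:ℝ)⁻¹) ^ n * M i x :=
          Finset.sum_congr rfl fun x _ => by rw [nu_cyl_toReal hcyl x]
      _ = ((2:ℝ)⁻¹) ^ n * ∑ x, M i x := by rw [Finset.mul_sum]
      _ = ((2:ℝ)⁻¹) ^ n * ((2:ℝ) ^ n / k) := by rw [hMrow i, card_fun_bool n]
      _ = (((2:ℝ)⁻¹) ^ n * (2:ℝ) ^ n) / k := by ring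
      _ = 1 / k := by rw [h2]
  · intro i j
    exact matShape_entry μ T hnn hμT M i j

set_option maxHeartbeats 2000000 in
/-- the hard inclusion -/
lemma mShape0_subset_closure {ν : Measure Cantor} [IsProbabilityMeasure ν]
    (hcyl : ∀ (n : ℕ) (x : Fin n → Bool), ν (cylF x) = (1 / 2 : ENNReal) ^ n)
    {μ : Measure (Cantor × Cantor)} [IsFiniteMeasure μ]
    (T : (n : ℕ) → Matrix (Fin n → Bool) (Fin n → Bool) ℝ)
    (hnn : ∀ (n : ℕ) (x y : Fin n → Bool), 0 ≤ T n x y)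
    (hμT : ∀ (n : ℕ) (x y : Fin n → Bool), μ (cylF x ×ˢ cylF y) = ENNReal.ofReal (T n x y))
    {k : ℕ} (hk : 0 < k) :
    mShape0 ν μ k ⊆ closure (⋃ n : ℕ, matShape (T n) k) := by
  rintro A ⟨f, hmeas, hpos, hsum, hint, hA⟩
  apply mem_closure_mat
  intro δ hδ
  classical
  set ρ : Measure Cantor := ν + (μ.map Prod.fst + μ.map Prod.snd) with hρdef
  haveI : IsFiniteMeasure ρ := by
    rw [hρdef]; infer_instance
  set R := (ρ Set.univ).toReal with hRdef
  have hR0 : 0 ≤ R := ENNReal.toReal_nonneg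
  set D : ℝ := 6 + 3 * (2 * k + 4) * R with hDdef
  have hD0 : 0 ≤ D := by positivity
  set ε := δ / (D + 1) with hεdef
  have hε : 0 < ε := by positivity
  have hb1 : ∀ i x, f i x ≤ 1 := fun i x =>
    calc f i x ≤ ∑ i', f i' x :=
          Finset.single_le_sum (fun i' _ => hpos i' x) (Finset.mem_univ i)
      _ = 1 := hsum x
  have hnorm : ∀ i x, ‖f i x‖ ≤ 1 := fun i x => by
    rw [Real.norm_eq_abs, abs_le]; exact ⟨by linarith [hpos i x], hb1 i x⟩
  have key := fun i : Fin k => dens ρ (hmeas i) (hnorm i) hε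
  choose nn cc hcc using key
  set N := Finset.univ.sup nn with hNdef
  have hNle : ∀ i, nn i ≤ N := fun i => Finset.le_sup (Finset.mem_univ i)
  set g : Fin k → (Fin N → Bool) → ℝ :=
    fun i x => cc i (fun j => x ⟨j, lt_of_lt_of_le j.2 (hNle i)⟩) with hgdef
  set a : Fin k → (Fin N → Bool) → ℝ := fun i => av ρ ((k:ℝ)⁻¹) (f i) with hadef
  have hk1 : (1:ℝ) ≤ k := by exact_mod_cast hk
  have hkpos : (0:ℝ) < k := by linarith
  have hkinv0 : (0:ℝ) < (k:ℝ)⁻¹ := by positivity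
  have hkinv1 : ((k:ℝ)⁻¹) ≤ 1 := by
    rw [inv_le_one₀ hkpos]; exact hk1
  have hfint : ∀ i, Integrable (f i) ρ := fun i => integrable_bdd ρ (hmeas i) (hnorm i)
  have ha0 : ∀ i x, 0 ≤ a i x := fun i x => av_nonneg (le_of_lt hkinv0) (hpos i) x
  have ha1 : ∀ i x, a i x ≤ 1 := fun i x => av_le_one hkinv1 (hb1 i) (hfint i) x
  have herr : ∀ i, ∫ ω, |f i ω - a i (res N ω)| ∂ρ ≤ 2 * ε := by
    intro i
    have h1 := av_err ρ (hmeas i) (hnorm i) (dflt := (k:ℝ)⁻¹)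
      (by rw [Real.norm_eq_abs, abs_of_pos hkinv0]; exact hkinv1) (g i)
    have h2 : ∫ ω, |f i ω - g i (res N ω)| ∂ρ ≤ ε := hcc i
    calc ∫ ω, |f i ω - a i (res N ω)| ∂ρ
        ≤ 2 * ∫ ω, |f i ω - g i (res N ω)| ∂ρ := h1
      _ ≤ 2 * ε := by linarith
  have hsuma : ∀ x : Fin N → Bool, ∑ i, a i x = 1 := by
    intro x
    by_cases h0 : ρ (cylF x) = 0
    · simp only [hadef, av, if_pos h0]
      rw [Finset.sum_const, Finset.card_univ, Fintype.card_fin, nsmul_eq_mul]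
      field_simp
    · have htor : 0 < (ρ (cylF x)).toReal := ENNReal.toReal_pos h0 (measure_ne_top ρ _)
      simp only [hadef, av, if_neg h0]
      rw [← Finset.sum_div, ← integral_finset_sum _ (fun i _ => (hfint i).integrableOn)]
      have heq : ∫ ω in cylF x, ∑ i, f i ω ∂ρ = (ρ (cylF x)).toReal := by
        rw [setIntegral_congr_fun (g := fun _ => (1:ℝ)) (measurableSet_cylF x)
          (fun ω _ => hsum ω), setIntegral_const, smul_eq_mul, mul_one, measureReal_def]
      rw [heq, div_self htor.ne']
  set w : ℝ := ((2:ℝ)⁻¹) ^ N with hwdef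
  have hw0 : 0 < w := by positivity
  have hw2 : (2:ℝ) ^ N * w = 1 := by rw [hwdef, ← mul_pow]; norm_num
  set b : Fin k → ℝ := fun i => w * ∑ x, a i x with hbdef
  have hbi : ∀ i, b i = ∫ ω, a i (res N ω) ∂ν := by
    intro i
    rw [integral_step ν (a i)]
    simp only [hbdef]
    rw [Finset.mul_sum]
    exact Finset.sum_congr rfl fun x _ => by rw [nu_cyl_toReal hcyl x, hwdef]
  have hmeasa : ∀ i, Measurable fun ω => a i (res N ω) := fun i =>
    (Measurable.of_discrete (f := a i)).comp (measurable_res N)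
  have hnorma : ∀ i ω, ‖a i (res N ω)‖ ≤ 1 := fun i ω => by
    rw [Real.norm_eq_abs, abs_le]
    exact ⟨by linarith [ha0 i (res N ω)], ha1 i (res N ω)⟩
  have hberr : ∀ i, |b i - (k:ℝ)⁻¹| ≤ 2 * ε := by
    intro i
    have hfiν : ∫ ω, f i ω ∂ν = (k:ℝ)⁻¹ := by rw [hint i, one_div]
    have hintaν : Integrable (fun ω => a i (res N ω)) ν :=
      integrable_bdd ν (hmeasa i) (hnorma i)
    have hintfν : Integrable (f i) ν := integrable_bdd ν (hmeas i) (hnorm i)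
    rw [hbi i, ← hfiν, ← integral_sub hintaν hintfν]
    have hνρ : ν ≤ ρ := by rw [hρdef]; exact Measure.le_add_right le_rfl
    calc |∫ ω, (a i (res N ω) - f i ω) ∂ν|
        ≤ ∫ ω, |a i (res N ω) - f i ω| ∂ν := by
          simpa [Real.norm_eq_abs] using
            norm_integral_le_integral_norm (μ := ν) (fun ω => a i (res N ω) - f i ω)
      _ = ∫ ω, |f i ω - a i (res N ω)| ∂ν := by
          simp only [abs_sub_comm]
      _ ≤ ∫ ω, |f i ω - a i (res N ω)| ∂ρ := by
          refine integral_mono_measure hνρ (Filter.Eventually.of_forall fun ω => abs_nonneg _) ?_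
          refine integrable_bdd (C := 2) ρ ((hmeas i).sub (hmeasa i)).abs fun ω => ?_
          rw [Real.norm_eq_abs, abs_abs]
          calc |f i ω - a i (res N ω)| ≤ |f i ω| + |a i (res N ω)| := abs_sub _ _
            _ ≤ 2 := by
                have h1 := hnorm i ω; have h2 := hnorma i ω
                rw [Real.norm_eq_abs] at h1 h2; linarith
      _ ≤ 2 * ε := herr i
  set t : ℝ := (k:ℝ)⁻¹ / ((k:ℝ)⁻¹ + 2 * ε) with htdef
  have hden : 0 < (k:ℝ)⁻¹ + 2 * ε := by positivity
  have ht0 : 0 < t := by positivity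
  have ht1 : t ≤ 1 := by rw [htdef, div_le_one hden]; linarith
  have h1t : 1 - t ≤ 2 * k * ε := by
    have heq : 1 - t = 2 * ε / ((k:ℝ)⁻¹ + 2 * ε) := by
      rw [htdef]; field_simp; ring
    rw [heq]
    calc 2 * ε / ((k:ℝ)⁻¹ + 2 * ε) ≤ 2 * ε / (k:ℝ)⁻¹ := by
          gcongr
          · linarith
      _ = 2 * ε * k := by field_simp
      _ = 2 * k * ε := by ring
  have hbpos : ∀ i, 0 ≤ b i := fun i => by
    simp only [hbdef]
    exact mul_nonneg hw0.le (Finset.sum_nonneg fun x _ => ha0 i x)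
  have htb : ∀ i, t * b i ≤ (k:ℝ)⁻¹ := by
    intro i
    have hble : b i ≤ (k:ℝ)⁻¹ + 2 * ε := by
      have := hberr i; rw [abs_le] at this; linarith [this.2]
    calc t * b i ≤ t * ((k:ℝ)⁻¹ + 2 * ε) :=
          mul_le_mul_of_nonneg_left hble ht0.le
      _ = (k:ℝ)⁻¹ := by rw [htdef]; field_simp
  have hc4 : ∀ i, (k:ℝ)⁻¹ - t * b i ≤ 4 * ε := by
    intro i
    have hbge : (k:ℝ)⁻¹ - 2 * ε ≤ b i := by
      have := hberr i; rw [abs_le] at this; linarith [this.1]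
    have h3 : t * ((k:ℝ)⁻¹ - 2 * ε) ≤ t * b i := mul_le_mul_of_nonneg_left hbge ht0.le
    have h2 : (1 - t) * (k:ℝ)⁻¹ ≤ 2 * ε := by
      calc (1 - t) * (k:ℝ)⁻¹ ≤ (2 * k * ε) * (k:ℝ)⁻¹ :=
            mul_le_mul_of_nonneg_right h1t hkinv0.le
        _ = 2 * ε * (k * (k:ℝ)⁻¹) := by ring
        _ = 2 * ε := by rw [mul_inv_cancel₀ (ne_of_gt hkpos), mul_one]
    have h4 : t * (2 * ε) ≤ 1 * (2 * ε) := mul_le_mul_of_nonneg_right ht1 (by positivity)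
    nlinarith [h3, h2, h4]
  set M : Matrix (Fin k) (Fin N → Bool) ℝ :=
    fun i x => t * a i x + ((k:ℝ)⁻¹ - t * b i) with hMdef
  have hM0 : ∀ i x, 0 ≤ M i x := fun i x => by
    simp only [hMdef]
    have := htb i
    have := mul_nonneg ht0.le (ha0 i x)
    linarith
  have hM2 : ∀ i x, M i x ≤ 2 := fun i x => by
    simp only [hMdef]
    have h1 : t * a i x ≤ 1 := by
      calc t * a i x ≤ 1 * 1 := mul_le_mul ht1 (ha1 i x) (ha0 i x) zero_le_one
        _ = 1 := one_mul 1
    have h2 : (k:ℝ)⁻¹ - t * b i ≤ 1 := by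
      have := mul_nonneg ht0.le (hbpos i); linarith [hkinv1]
    linarith
  have hMrow : ∀ i, ∑ x, M i x = (Fintype.card (Fin N → Bool) : ℝ) / k := by
    intro i
    rw [card_fun_bool]
    simp only [hMdef]
    rw [Finset.sum_add_distrib, ← Finset.mul_sum, Finset.sum_const, Finset.card_univ,
      nsmul_eq_mul, card_fun_bool]
    simp only [hbdef]
    rw [div_eq_mul_inv]
    linear_combination (-(t * (∑ x, a i x)) - t * (∑ x, a i x) * ((k:ℝ)⁻¹ - 0)) * 0 +
      (-(t * (∑ x : Fin N → Bool, a i x))) * hw2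
  have hMcol : ∀ x, ∑ i, M i x = 1 := by
    intro x
    simp only [hMdef]
    rw [Finset.sum_add_distrib, ← Finset.mul_sum, hsuma x, mul_one]
    have hsumb : ∑ i, b i = 1 := by
      simp only [hbdef]
      rw [← Finset.mul_sum, Finset.sum_comm]
      rw [Finset.sum_congr rfl (fun x _ => hsuma x), Finset.sum_const, Finset.card_univ,
        nsmul_eq_mul, mul_one, card_fun_bool, mul_comm]
      exact hw2
    have : ∑ i, ((k:ℝ)⁻¹ - t * b i) = 1 - t := by
      rw [Finset.sum_sub_distrib, ← Finset.mul_sum, hsumb, mul_one, Finset.sum_const,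
        Finset.card_univ, Fintype.card_fin, nsmul_eq_mul, mul_inv_cancel₀ (ne_of_gt hkpos)]
    rw [this]
    ring
  -- the candidate matrix
  refine ⟨M * (T N) * Mᵀ, Set.mem_iUnion.2 ⟨N, ⟨M, ⟨hM0, hMrow, hMcol⟩, rfl⟩⟩, ?_⟩
  intro i j
  rw [hA i j, matShape_entry μ (T N) (hnn N) (hμT N) M i j]
  set h : Fin k → Cantor → ℝ := fun i ω => M i (res N ω) with hhdef
  have hhmeas : ∀ i, Measurable (h i) := fun i =>
    (Measurable.of_discrete (f := M i)).comp (measurable_res N)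
  have hh0 : ∀ i ω, 0 ≤ h i ω := fun i ω => hM0 i _
  have hh2 : ∀ i ω, h i ω ≤ 2 := fun i ω => hM2 i _
  have hkε : (0:ℝ) ≤ k * ε := by positivity
  have hMa : ∀ i' x, |M i' x - a i' x| ≤ (2 * k + 4) * ε := by
    intro i' x
    simp only [hMdef]
    have h1 : t * a i' x + ((k:ℝ)⁻¹ - t * b i') - a i' x
        = ((k:ℝ)⁻¹ - t * b i') - (1 - t) * a i' x := by ring
    rw [h1]
    have hc0 : 0 ≤ (k:ℝ)⁻¹ - t * b i' := by linarith [htb i']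
    have h1t0 : 0 ≤ 1 - t := by linarith
    have h2 : (1 - t) * a i' x ≤ 2 * k * ε := by
      calc (1 - t) * a i' x ≤ (2 * k * ε) * 1 :=
            mul_le_mul h1t (ha1 i' x) (ha0 i' x) (by positivity)
        _ = 2 * k * ε := mul_one _
    have h3 : 0 ≤ (1 - t) * a i' x := mul_nonneg h1t0 (ha0 i' x)
    rw [abs_le]
    refine ⟨by linarith [hc4 i'], by linarith [hc4 i']⟩
  have hfhmeas : ∀ i', Measurable fun ω => |f i' ω - h i' ω| := fun i' =>
    ((hmeas i').sub (hhmeas i')).abs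
  have hfhbd : ∀ i' ω, ‖|f i' ω - h i' ω|‖ ≤ 3 := by
    intro i' ω
    rw [Real.norm_eq_abs, abs_abs]
    calc |f i' ω - h i' ω| ≤ |f i' ω| + |h i' ω| := abs_sub _ _
      _ ≤ 3 := by
          have h1 := hnorm i' ω; rw [Real.norm_eq_abs] at h1
          have h2 := hh0 i' ω; have h3 := hh2 i' ω
          rw [abs_of_nonneg h2]; linarith
  have hfh : ∀ i', ∫ ω, |f i' ω - h i' ω| ∂ρ ≤ 2 * ε + (2 * k + 4) * ε * R := by
    intro i'
    have hptw : ∀ ω, |f i' ω - h i' ω| ≤ |f i' ω - a i' (res N ω)| + (2 * k + 4) * ε := by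
      intro ω
      have hsp : f i' ω - h i' ω
          = (f i' ω - a i' (res N ω)) + (a i' (res N ω) - M i' (res N ω)) := by
        simp only [hhdef]; ring
      rw [hsp]
      calc |(f i' ω - a i' (res N ω)) + (a i' (res N ω) - M i' (res N ω))|
          ≤ |f i' ω - a i' (res N ω)| + |a i' (res N ω) - M i' (res N ω)| := abs_add_le _ _
        _ ≤ |f i' ω - a i' (res N ω)| + (2 * k + 4) * ε := by
            have := hMa i' (res N ω)
            rw [abs_sub_comm] at this
            linarith
    have hint1 : Integrable (fun ω => |f i' ω - h i' ω|) ρ :=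
      integrable_bdd (C := 3) ρ (hfhmeas i') (hfhbd i')
    have hint2a : Integrable (fun ω => |f i' ω - a i' (res N ω)|) ρ := by
      refine integrable_bdd (C := 2) ρ ((hmeas i').sub (hmeasa i')).abs fun ω => ?_
      rw [Real.norm_eq_abs, abs_abs]
      calc |f i' ω - a i' (res N ω)| ≤ |f i' ω| + |a i' (res N ω)| := abs_sub _ _
        _ ≤ 2 := by
            have h1 := hnorm i' ω; have h2 := hnorma i' ω
            rw [Real.norm_eq_abs] at h1 h2; linarith
    calc ∫ ω, |f i' ω - h i' ω| ∂ρ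
        ≤ ∫ ω, (|f i' ω - a i' (res N ω)| + (2 * k + 4) * ε) ∂ρ :=
          integral_mono hint1 (hint2a.add (integrable_const _)) hptw
      _ = (∫ ω, |f i' ω - a i' (res N ω)| ∂ρ) + (2 * k + 4) * ε * R := by
          rw [integral_add hint2a (integrable_const _), integral_const, smul_eq_mul, mul_comm,
              measureReal_def, ← hRdef]
      _ ≤ 2 * ε + (2 * k + 4) * ε * R := by linarith [herr i']
  have hlefst : μ.map Prod.fst ≤ ρ := by
    rw [hρdef]
    calc μ.map Prod.fst ≤ μ.map Prod.fst + μ.map Prod.snd := Measure.le_add_right le_rfl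
      _ ≤ ν + (μ.map Prod.fst + μ.map Prod.snd) := Measure.le_add_left le_rfl
  have hlesnd : μ.map Prod.snd ≤ ρ := by
    rw [hρdef]
    calc μ.map Prod.snd ≤ μ.map Prod.fst + μ.map Prod.snd := Measure.le_add_left le_rfl
      _ ≤ ν + (μ.map Prod.fst + μ.map Prod.snd) := Measure.le_add_left le_rfl
  have hmargfst : ∀ i', ∫ p : Cantor × Cantor, |f i' p.1 - h i' p.1| ∂μ
      ≤ 2 * ε + (2 * k + 4) * ε * R := by
    intro i'
    have h1 : ∫ p : Cantor × Cantor, |f i' p.1 - h i' p.1| ∂μ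
        = ∫ ω, |f i' ω - h i' ω| ∂(μ.map Prod.fst) :=
      (integral_map measurable_fst.aemeasurable (hfhmeas i').aestronglyMeasurable).symm
    rw [h1]
    calc ∫ ω, |f i' ω - h i' ω| ∂(μ.map Prod.fst) ≤ ∫ ω, |f i' ω - h i' ω| ∂ρ :=
          integral_mono_measure hlefst (Filter.Eventually.of_forall fun ω => abs_nonneg _)
            (integrable_bdd (C := 3) ρ (hfhmeas i') (hfhbd i'))
      _ ≤ 2 * ε + (2 * k + 4) * ε * R := hfh i'
  have hmargsnd : ∀ i', ∫ p : Cantor × Cantor, |f i' p.2 - h i' p.2| ∂μ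
      ≤ 2 * ε + (2 * k + 4) * ε * R := by
    intro i'
    have h1 : ∫ p : Cantor × Cantor, |f i' p.2 - h i' p.2| ∂μ
        = ∫ ω, |f i' ω - h i' ω| ∂(μ.map Prod.snd) :=
      (integral_map measurable_snd.aemeasurable (hfhmeas i').aestronglyMeasurable).symm
    rw [h1]
    calc ∫ ω, |f i' ω - h i' ω| ∂(μ.map Prod.snd) ≤ ∫ ω, |f i' ω - h i' ω| ∂ρ :=
          integral_mono_measure hlesnd (Filter.Eventually.of_forall fun ω => abs_nonneg _)
            (integrable_bdd (C := 3) ρ (hfhmeas i') (hfhbd i'))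
      _ ≤ 2 * ε + (2 * k + 4) * ε * R := hfh i'
  -- now combine
  have hintff : Integrable (fun p : Cantor × Cantor => f i p.1 * f j p.2) μ := by
    refine integrable_bdd (C := 1) μ
      (((hmeas i).comp measurable_fst).mul ((hmeas j).comp measurable_snd)) fun p => ?_
    rw [Real.norm_eq_abs, abs_mul]
    have h1 := hnorm i p.1; have h2 := hnorm j p.2
    rw [Real.norm_eq_abs] at h1 h2
    calc |f i p.1| * |f j p.2| ≤ 1 * 1 :=
          mul_le_mul h1 h2 (abs_nonneg _) zero_le_one
      _ = 1 := one_mul 1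
  have hinthh : Integrable (fun p : Cantor × Cantor => h i p.1 * h j p.2) μ := by
    refine integrable_bdd (C := 4) μ
      (((hhmeas i).comp measurable_fst).mul ((hhmeas j).comp measurable_snd)) fun p => ?_
    rw [Real.norm_eq_abs, abs_mul, abs_of_nonneg (hh0 i p.1), abs_of_nonneg (hh0 j p.2)]
    calc h i p.1 * h j p.2 ≤ 2 * 2 :=
          mul_le_mul (hh2 i p.1) (hh2 j p.2) (hh0 j p.2) (by norm_num)
      _ = 4 := by norm_num
  have hptw2 : ∀ p : Cantor × Cantor, |f i p.1 * f j p.2 - h i p.1 * h j p.2|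
      ≤ |f i p.1 - h i p.1| + 2 * |f j p.2 - h j p.2| := by
    intro p
    have hsp : f i p.1 * f j p.2 - h i p.1 * h j p.2
        = (f i p.1 - h i p.1) * f j p.2 + h i p.1 * (f j p.2 - h j p.2) := by ring
    rw [hsp]
    calc |(f i p.1 - h i p.1) * f j p.2 + h i p.1 * (f j p.2 - h j p.2)|
        ≤ |(f i p.1 - h i p.1) * f j p.2| + |h i p.1 * (f j p.2 - h j p.2)| := abs_add_le _ _
      _ ≤ |f i p.1 - h i p.1| * 1 + 2 * |f j p.2 - h j p.2| := by
          rw [abs_mul, abs_mul]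
          refine add_le_add ?_ ?_
          · refine mul_le_mul_of_nonneg_left ?_ (abs_nonneg _)
            have := hnorm j p.2; rwa [Real.norm_eq_abs] at this
          · refine mul_le_mul_of_nonneg_right ?_ (abs_nonneg _)
            rw [abs_of_nonneg (hh0 i p.1)]; exact hh2 i p.1
      _ = |f i p.1 - h i p.1| + 2 * |f j p.2 - h j p.2| := by ring
  have hintd1 : Integrable (fun p : Cantor × Cantor => |f i p.1 - h i p.1|) μ := by
    refine integrable_bdd (C := 3) μ
      (((hmeas i).comp measurable_fst).sub ((hhmeas i).comp measurable_fst)).abs fun p => ?_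
    exact hfhbd i p.1
  have hintd2 : Integrable (fun p : Cantor × Cantor => |f j p.2 - h j p.2|) μ := by
    refine integrable_bdd (C := 3) μ
      (((hmeas j).comp measurable_snd).sub ((hhmeas j).comp measurable_snd)).abs fun p => ?_
    exact hfhbd j p.2
  have hintd : Integrable
      (fun p : Cantor × Cantor => |f i p.1 * f j p.2 - h i p.1 * h j p.2|) μ := by
    refine integrable_bdd (C := 9) μ (((((hmeas i).comp measurable_fst).mul
      ((hmeas j).comp measurable_snd))).sub ((((hhmeas i).comp measurable_fst).mul
      ((hhmeas j).comp measurable_snd)))).abs fun p => ?_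
    rw [Real.norm_eq_abs, abs_abs]
    calc |f i p.1 * f j p.2 - h i p.1 * h j p.2|
        ≤ |f i p.1 - h i p.1| + 2 * |f j p.2 - h j p.2| := hptw2 p
      _ ≤ 9 := by
          have h1 := hfhbd i p.1; have h2 := hfhbd j p.2
          rw [Real.norm_eq_abs, abs_abs] at h1 h2
          linarith
  calc |(∫ p : Cantor × Cantor, f i p.1 * f j p.2 ∂μ)
        - ∫ p : Cantor × Cantor, M i (res N p.1) * M j (res N p.2) ∂μ|
      = |∫ p : Cantor × Cantor, (f i p.1 * f j p.2 - h i p.1 * h j p.2) ∂μ| := by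
        rw [integral_sub hintff hinthh]
    _ ≤ ∫ p : Cantor × Cantor, |f i p.1 * f j p.2 - h i p.1 * h j p.2| ∂μ := by
        simpa [Real.norm_eq_abs] using norm_integral_le_integral_norm (μ := μ)
          (fun p : Cantor × Cantor => f i p.1 * f j p.2 - h i p.1 * h j p.2)
    _ ≤ ∫ p : Cantor × Cantor, (|f i p.1 - h i p.1| + 2 * |f j p.2 - h j p.2|) ∂μ :=
        integral_mono hintd (hintd1.add (hintd2.const_mul 2)) hptw2
    _ = (∫ p : Cantor × Cantor, |f i p.1 - h i p.1| ∂μ)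
        + 2 * ∫ p : Cantor × Cantor, |f j p.2 - h j p.2| ∂μ := by
        rw [integral_add hintd1 (hintd2.const_mul 2), MeasureTheory.integral_const_mul]
    _ ≤ (2 * ε + (2 * k + 4) * ε * R) + 2 * (2 * ε + (2 * k + 4) * ε * R) := by
        have h1 := hmargfst i
        have h2 := hmargsnd j
        have h3 : (0:ℝ) ≤ ∫ p : Cantor × Cantor, |f j p.2 - h j p.2| ∂μ :=
          integral_nonneg fun p => abs_nonneg _
        linarith
    _ = ε * D := by rw [hDdef]; ring
    _ ≤ δ := by
        rw [hεdef, div_mul_eq_mul_div, div_le_iff₀ (by positivity)]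
        nlinarith [hδ.le, hD0]

end Stmt11

/-- If `μ` is the measure on `𝒞 × 𝒞` associated with a consistent sequence of
nonnegative symmetric tables `(Tₙ)`, then `C(μ,k)` is the closure of `⋃ₙ C(Tₙ,k)`. -/
theorem stmt_11 (ν : Measure Cantor) (hν : IsCoinMeasure ν)
    (T : (n : ℕ) → Matrix (Fin n → Bool) (Fin n → Bool) ℝ)
    (hnn : ∀ (n : ℕ) (x y : Fin n → Bool), 0 ≤ T n x y)
    (hsymm : ∀ (n : ℕ) (x y : Fin n → Bool), T n x y = T n y x)
    (hcons : ∀ (n : ℕ) (x y : Fin n → Bool),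
      T n x y = T (n + 1) (Fin.snoc x false) (Fin.snoc y false)
        + T (n + 1) (Fin.snoc x false) (Fin.snoc y true)
        + T (n + 1) (Fin.snoc x true) (Fin.snoc y false)
        + T (n + 1) (Fin.snoc x true) (Fin.snoc y true))
    (μ : Measure (Cantor × Cantor))
    (hμ : ∀ (n : ℕ) (x y : Fin n → Bool), μ (cylF x ×ˢ cylF y) = ENNReal.ofReal (T n x y))
    (k : ℕ) (hk : 0 < k) :
    mShape ν μ k = closure (⋃ n : ℕ, matShape (T n) k) := by
  obtain ⟨hprob, hcyl⟩ := hν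
  haveI : IsProbabilityMeasure ν := hprob
  haveI : IsFiniteMeasure μ := by
    constructor
    have h0 := hμ 0 (fun _ => false) (fun _ => false)
    rw [Stmt11.cylF_zero, Set.univ_prod_univ] at h0
    rw [h0]
    exact ENNReal.ofReal_lt_top
  apply Set.Subset.antisymm
  · exact closure_minimal
      (Stmt11.mShape0_subset_closure hcyl T hnn (fun n x y => hμ n x y) hk) isClosed_closure
  · exact closure_mono (Set.iUnion_subset fun n =>
      Stmt11.matShape_subset_mShape0 hcyl μ (T n) (hnn n) (hμ n) hk)
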